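/- Let m > n ≥ 1 be natural numbers, let G = S_m be the symmetric group of degree m, and let H be the subgroup of G consisting of all permutations that fix each of the points n+1, n+2, …, m, so H is isomorphic to S_n. Then (G, H) is an admissible pair: for every irreducible complex representation τ of H with character χ_τ, every g ∈ H, and every s ∈ G with s g s⁻¹ ∈ H, one has χ_τ(s g s⁻¹) = χ_τ(g). -/

import Mathlib

open CategoryTheory

/-- The pair `(G, H)` is *admissible* if for every irreducible complex representation `τ`
of `H` with character `χ_τ`, every `g ∈ H` and every `s ∈ G` with `s g s⁻¹ ∈ H`, one has
`χ_τ(s g s⁻¹) = χ_τ(g)`. -/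
def IsAdmissiblePair (G : Type) [Group G] (H : Subgroup G) : Prop :=
  ∀ (τ : FDRep ℂ H), Simple τ →
    ∀ (g : H) (s : G) (hs : s * (g : G) * s⁻¹ ∈ H),
      τ.character ⟨s * (g : G) * s⁻¹, hs⟩ = τ.character g


/-- For `m > n ≥ 1`, the pair `(S_m, S_n)`, where `S_n` is realised inside
`S_m = Perm (Fin m)` as the subgroup of permutations fixing each of the points
`n+1, …, m` (zero-indexed: each point with index `≥ n`), is an admissible pair. -/
theorem isAdmissiblePair_symm_symm (m n : ℕ) (hn : 1 ≤ n) (hnm : n < m) :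
    IsAdmissiblePair (Equiv.Perm (Fin m))
      (fixingSubgroup (Equiv.Perm (Fin m)) {x : Fin m | n ≤ (x : ℕ)}) := by
  set H := fixingSubgroup (Equiv.Perm (Fin m)) {x : Fin m | n ≤ (x : ℕ)} with hH
  intro τ _ g s hs
  set p : Fin m → Prop := fun x => (x : ℕ) < n with hp
  -- a member of H preserves p
  have key : ∀ (h : Equiv.Perm (Fin m)), h ∈ H → ∀ x, p x ↔ p (h x) := by
    intro h hh x
    have fix : ∀ y : Fin m, n ≤ (y : ℕ) → h y = y := fun y hy =>
      (mem_fixingSubgroup_iff _).mp hh y hy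
    constructor
    · intro hx
      by_contra hcon
      have : n ≤ ((h x : Fin m) : ℕ) := not_lt.mp hcon
      have h2 := fix (h x) this
      have h3 : h x = x := h.injective h2
      rw [h3] at hcon
      exact hcon hx
    · intro hx
      by_contra hcon
      have : h x = x := fix x (not_lt.mp hcon)
      rw [this] at hx
      exact hcon hx
  have hmoves : ∀ (h : Equiv.Perm (Fin m)), h ∈ H → ∀ x : Fin m, h x ≠ x → p x := by
    intro h hh x hx
    by_contra hcon
    exact hx ((mem_fixingSubgroup_iff _).mp hh x (not_lt.mp hcon))
  set c : Equiv.Perm (Fin m) := s * (g : Equiv.Perm (Fin m)) * s⁻¹ with hc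
  have hgH : (g : Equiv.Perm (Fin m)) ∈ H := g.2
  have hcH : c ∈ H := hs
  -- restrictions
  set g' := Equiv.Perm.subtypePerm (g : Equiv.Perm (Fin m)) (fun x => (key _ hgH x).symm)
  set c' := Equiv.Perm.subtypePerm c (fun x => (key _ hcH x).symm)
  have hog : Equiv.Perm.ofSubtype g' = (g : Equiv.Perm (Fin m)) :=
    Equiv.Perm.ofSubtype_subtypePerm _ (hmoves _ hgH)
  have hoc : Equiv.Perm.ofSubtype c' = c :=
    Equiv.Perm.ofSubtype_subtypePerm _ (hmoves _ hcH)
  -- same cycle type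
  have hct : g'.cycleType = c'.cycleType := by
    have h1 : (Equiv.Perm.ofSubtype g').cycleType = (Equiv.Perm.ofSubtype c').cycleType := by
      rw [hog, hoc, hc, Equiv.Perm.cycleType_conj]
    rwa [Equiv.Perm.cycleType_ofSubtype, Equiv.Perm.cycleType_ofSubtype] at h1
  obtain ⟨σ, hσ⟩ := isConj_iff.mp (Equiv.Perm.isConj_iff_cycleType_eq.mpr hct)
  -- t conjugates g to c inside H
  set t : Equiv.Perm (Fin m) := Equiv.Perm.ofSubtype σ with ht
  have htH : t ∈ H := by
    rw [hH, mem_fixingSubgroup_iff]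
    intro y hy
    simp only [Set.mem_setOf_eq] at hy
    exact Equiv.Perm.ofSubtype_apply_of_not_mem σ (by simpa [hp] using not_lt.mpr hy)
  have hconj : t * (g : Equiv.Perm (Fin m)) * t⁻¹ = c := by
    rw [ht, ← hog, ← hoc, ← map_inv, ← map_mul, ← map_mul, hσ]
  have heq : (⟨s * (g : Equiv.Perm (Fin m)) * s⁻¹, hs⟩ : H)
      = ⟨t, htH⟩ * g * (⟨t, htH⟩)⁻¹ :=
    Subtype.ext (by simpa using hconj.symm)
  rw [heq]
  exact τ.char_conj _ _
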